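/- arXiv:1703.10459 — 3 statements merged into one kernel-verified Lean document; each statement's English description precedes it below -/
import Mathlib

section
/- Let 𝓗 be a real separable Hilbert space, let E₁,…,Eₙ be measurable spaces and let Φ : E₁×…×Eₙ → 𝓗 be a bounded measurable function such that for every index ℓ and all choices of coordinates z₁,…,zₙ and z′_ℓ one has ‖Φ(z₁,…,z_ℓ,…,zₙ) − Φ(z₁,…,z′_ℓ,…,zₙ)‖_𝓗 ≤ R. If Z₁,…,Zₙ are independent random variables with Zᵢ taking values in Eᵢ, then E(‖Φ(Z₁,…,Zₙ) − E[Φ(Z₁,…,Zₙ)]‖²_𝓗) ≤ n R². -/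
open MeasureTheory ProbabilityTheory

local notation "⟪" x ", " y "⟫" => @inner ℝ _ _ x y

section Aux

variable {H : Type*} [NormedAddCommGroup H] [InnerProductSpace ℝ H] [CompleteSpace H]

private lemma insertNth_update_aux {n : ℕ} {α : Fin (n + 1) → Type*} (p : Fin (n + 1))
    (x : α p) (f : ∀ j, α (p.succAbove j)) (j : Fin n) (y : α (p.succAbove j)) :
    p.insertNth x (Function.update f j y) =
      Function.update (p.insertNth x f) (p.succAbove j) y := by
  ext i
  refine Fin.succAboveCases p ?_ (fun k => ?_) i
  · rw [Fin.insertNth_apply_same,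
      Function.update_of_ne (Fin.succAbove_ne p j).symm, Fin.insertNth_apply_same]
  · rcases eq_or_ne k j with rfl | hkj
    · simp
    · rw [Fin.insertNth_apply_succAbove, Function.update_of_ne hkj,
        Function.update_of_ne (fun h => hkj (Fin.succAbove_right_injective h)),
        Fin.insertNth_apply_succAbove]

/-- Two-factor law-of-total-variance bound. -/
private lemma twofactor {α β : Type*} [MeasurableSpace α] [MeasurableSpace β]
    (μ : Measure α) (ν : Measure β) [IsProbabilityMeasure μ] [IsProbabilityMeasure ν]
    (f : α × β → H) (hf : StronglyMeasurable f) (C : ℝ) (hC : ∀ p, ‖f p‖ ≤ C)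
    (A R : ℝ)
    (hA : ∀ x, ∫ y, ‖f (x, y) - ∫ y', f (x, y') ∂ν‖ ^ 2 ∂ν ≤ A)
    (hR : ∀ x x', ‖(∫ y, f (x, y) ∂ν) - ∫ y, f (x', y) ∂ν‖ ≤ R) :
    ∫ p, ‖f p - ∫ p', f p' ∂(μ.prod ν)‖ ^ 2 ∂(μ.prod ν) ≤ A + R ^ 2 := by
  set m : H := ∫ p', f p' ∂(μ.prod ν) with hm
  set g : α → H := fun x => ∫ y, f (x, y) ∂ν with hgdef
  have hgmeas : StronglyMeasurable g := hf.integral_prod_right'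
  have hint : Integrable f (μ.prod ν) :=
    Integrable.mono' (integrable_const C) hf.aestronglyMeasurable (ae_of_all _ hC)
  have hmeq : m = ∫ x, g x ∂μ := integral_prod f hint
  have hnormm : ‖m‖ ≤ C := by
    rw [hm]
    calc ‖∫ p', f p' ∂(μ.prod ν)‖ ≤ C * ((μ.prod ν) Set.univ).toReal :=
          norm_integral_le_of_norm_le_const (ae_of_all _ hC)
      _ = C := by simp
  -- integrand on the product
  have hsqmeas : StronglyMeasurable fun p => ‖f p - m‖ ^ 2 :=
    (continuous_pow 2).comp_stronglyMeasurable (hf.sub stronglyMeasurable_const).norm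
  have hsqbdd : ∀ p, ‖‖f p - m‖ ^ 2‖ ≤ (2 * C) ^ 2 := by
    intro p
    rw [Real.norm_of_nonneg (by positivity)]
    have h1 : ‖f p - m‖ ≤ 2 * C := by
      calc ‖f p - m‖ ≤ ‖f p‖ + ‖m‖ := norm_sub_le _ _
        _ ≤ 2 * C := by linarith [hC p]
    exact pow_le_pow_left₀ (norm_nonneg _) h1 2
  have hsqint : Integrable (fun p => ‖f p - m‖ ^ 2) (μ.prod ν) :=
    Integrable.mono' (integrable_const ((2 * C) ^ 2)) hsqmeas.aestronglyMeasurable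
      (ae_of_all _ hsqbdd)
  rw [integral_prod _ hsqint]
  -- fixed-x integrability facts
  have hfx : ∀ x, Integrable (fun y => f (x, y)) ν := by
    intro x
    exact Integrable.mono' (integrable_const C)
      (hf.comp_measurable measurable_prodMk_left).aestronglyMeasurable
      (ae_of_all _ fun y => hC _)
  have hgC : ∀ x, ‖g x‖ ≤ C := by
    intro x
    calc ‖∫ y, f (x, y) ∂ν‖ ≤ C * (ν Set.univ).toReal :=
          norm_integral_le_of_norm_le_const (ae_of_all _ fun y => hC _)
      _ = C := by simp
  -- bound ‖g x - m‖ ≤ R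
  have hgm : ∀ x, ‖g x - m‖ ≤ R := by
    intro x
    have hgint : Integrable g μ :=
      Integrable.mono' (integrable_const C) hgmeas.aestronglyMeasurable (ae_of_all _ hgC)
    have : g x - m = ∫ x', (g x - g x') ∂μ := by
      rw [integral_sub (integrable_const _) hgint, integral_const, probReal_univ,
        one_smul, hmeq]
    rw [this]
    calc ‖∫ x', (g x - g x') ∂μ‖ ≤ R * (μ Set.univ).toReal :=
          norm_integral_le_of_norm_le_const (ae_of_all _ fun x' => hR x x')
      _ = R := by simp
  -- per-x decomposition
  have hkey : ∀ x, ∫ y, ‖f (x, y) - m‖ ^ 2 ∂ν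
      = (∫ y, ‖f (x, y) - g x‖ ^ 2 ∂ν) + ‖g x - m‖ ^ 2 := by
    intro x
    have hsub : Integrable (fun y => f (x, y) - g x) ν := (hfx x).sub (integrable_const _)
    have hzero : ∫ y, (f (x, y) - g x) ∂ν = 0 := by
      rw [integral_sub (hfx x) (integrable_const _), integral_const, probReal_univ,
        one_smul, sub_self]
    have hexp : ∀ y, ‖f (x, y) - m‖ ^ 2
        = ‖f (x, y) - g x‖ ^ 2 + (2 * ⟪g x - m, f (x, y) - g x⟫ + ‖g x - m‖ ^ 2) := by
      intro y
      have := norm_add_sq_real (f (x, y) - g x) (g x - m)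
      rw [sub_add_sub_cancel] at this
      rw [this, real_inner_comm]
      ring
    have hintsq : Integrable (fun y => ‖f (x, y) - g x‖ ^ 2) ν := by
      refine Integrable.mono' (integrable_const ((2 * C) ^ 2))
        ((continuous_pow 2).comp_stronglyMeasurable
          ((hf.comp_measurable measurable_prodMk_left).sub
            stronglyMeasurable_const).norm).aestronglyMeasurable (ae_of_all _ fun y => ?_)
      rw [Real.norm_of_nonneg (by positivity)]
      have h1 : ‖f (x, y) - g x‖ ≤ 2 * C := by
        calc ‖f (x, y) - g x‖ ≤ ‖f (x, y)‖ + ‖g x‖ := norm_sub_le _ _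
          _ ≤ 2 * C := by linarith [hC (x, y), hgC x]
      exact pow_le_pow_left₀ (norm_nonneg _) h1 2
    have hintinner : Integrable (fun y => 2 * ⟪g x - m, f (x, y) - g x⟫ + ‖g x - m‖ ^ 2) ν :=
      ((hsub.const_inner (g x - m)).const_mul 2).add (integrable_const _)
    calc ∫ y, ‖f (x, y) - m‖ ^ 2 ∂ν
        = ∫ y, (‖f (x, y) - g x‖ ^ 2
            + (2 * ⟪g x - m, f (x, y) - g x⟫ + ‖g x - m‖ ^ 2)) ∂ν := by
          exact integral_congr_ae (ae_of_all _ hexp)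
      _ = (∫ y, ‖f (x, y) - g x‖ ^ 2 ∂ν)
            + ∫ y, (2 * ⟪g x - m, f (x, y) - g x⟫ + ‖g x - m‖ ^ 2) ∂ν :=
          integral_add hintsq hintinner
      _ = (∫ y, ‖f (x, y) - g x‖ ^ 2 ∂ν) + ‖g x - m‖ ^ 2 := by
          rw [integral_add ((hsub.const_inner (g x - m)).const_mul 2) (integrable_const _),
            integral_const_mul, integral_inner hsub, hzero, inner_zero_right, integral_const,
            probReal_univ]
          simp
  -- conclude
  have hle : ∀ x, ∫ y, ‖f (x, y) - m‖ ^ 2 ∂ν ≤ A + R ^ 2 := by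
    intro x
    rw [hkey x]
    have h1 : ‖g x - m‖ ^ 2 ≤ R ^ 2 := pow_le_pow_left₀ (norm_nonneg _) (hgm x) 2
    linarith [hA x]
  calc ∫ x, ∫ y, ‖f (x, y) - m‖ ^ 2 ∂ν ∂μ ≤ ∫ _x, (A + R ^ 2) ∂μ := by
        refine integral_mono_of_nonneg (ae_of_all _ fun x => ?_) (integrable_const _)
          (ae_of_all _ hle)
        exact integral_nonneg fun y => by positivity
    _ = A + R ^ 2 := by simp

universe u

/-- McDiarmid-type variance bound for product measures, by induction on `n`. -/
private lemma pi_mcdiarmid : ∀ (n : ℕ) (E : Fin n → Type u) (inst : ∀ i, MeasurableSpace (E i))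
    (μ : ∀ i, Measure (E i)) (_ : ∀ i, IsProbabilityMeasure (μ i))
    (Φ : (∀ i, E i) → H) (_ : StronglyMeasurable Φ) (C : ℝ) (_ : ∀ z, ‖Φ z‖ ≤ C)
    (R : ℝ) (_ : ∀ (ℓ : Fin n) (z : ∀ i, E i) (z' : E ℓ),
      ‖Φ z - Φ (Function.update z ℓ z')‖ ≤ R),
    ∫ x, ‖Φ x - ∫ x', Φ x' ∂Measure.pi μ‖ ^ 2 ∂Measure.pi μ ≤ n * R ^ 2 := by
  intro n
  induction n with
  | zero =>
    intro E inst μ hprob Φ hm C hb R hdiff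
    have hsub : ∀ x y : (∀ i : Fin 0, E i), x = y := fun x y => funext fun i => i.elim0
    have hzero : ∀ x, Φ x - ∫ x', Φ x' ∂Measure.pi μ = 0 := by
      intro x
      have : (fun x' => Φ x') = fun _ => Φ x := funext fun x' => by rw [hsub x' x]
      rw [this, integral_const, probReal_univ, one_smul, sub_self]
    simp [hzero]
  | succ n ih =>
    intro E inst μ hprob Φ hm C hb R hdiff
    set ν : Measure (E 0) := μ 0 with hν
    set π' : Measure (∀ j : Fin n, E ((0 : Fin (n + 1)).succAbove j)) :=
      Measure.pi (fun j => μ ((0 : Fin (n + 1)).succAbove j)) with hπ'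
    haveI : ∀ j : Fin n, IsProbabilityMeasure (μ ((0 : Fin (n + 1)).succAbove j)) :=
      fun j => hprob _
    haveI : IsProbabilityMeasure π' := by rw [hπ']; infer_instance
    set e := MeasurableEquiv.piFinSuccAbove E 0 with he
    have hmp : MeasurePreserving e (Measure.pi μ) (ν.prod π') :=
      measurePreserving_piFinSuccAbove μ 0
    have hsymm : ∀ p, e.symm p = Fin.insertNth 0 p.1 p.2 := fun p => rfl
    have htrans : ∀ (G : (∀ i, E i) → ℝ),
        ∫ x, G x ∂Measure.pi μ = ∫ p, G (e.symm p) ∂(ν.prod π') := by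
      intro G
      rw [← MeasurePreserving.integral_comp' hmp.symm G]
    have htransH : ∀ (G : (∀ i, E i) → H),
        ∫ x, G x ∂Measure.pi μ = ∫ p, G (e.symm p) ∂(ν.prod π') := by
      intro G
      rw [← MeasurePreserving.integral_comp' hmp.symm G]
    set f : E 0 × (∀ j : Fin n, E ((0 : Fin (n + 1)).succAbove j)) → H :=
      fun p => Φ (e.symm p) with hfdef
    have hfmeas : StronglyMeasurable f := hm.comp_measurable e.symm.measurable
    have hmean : ∫ x', Φ x' ∂Measure.pi μ = ∫ p', f p' ∂(ν.prod π') := htransH Φ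
    rw [htrans (fun x => ‖Φ x - ∫ x', Φ x' ∂Measure.pi μ‖ ^ 2), hmean]
    have key : ∫ p, ‖f p - ∫ p', f p' ∂(ν.prod π')‖ ^ 2 ∂(ν.prod π') ≤ n * R ^ 2 + R ^ 2 := by
      refine twofactor ν π' f hfmeas C (fun p => hb _) (n * R ^ 2) R ?_ ?_
      · intro x
        refine ih (fun j => E ((0 : Fin (n + 1)).succAbove j)) _
          (fun j => μ ((0 : Fin (n + 1)).succAbove j)) (fun j => hprob _)
          (fun y => f (x, y))
          (hfmeas.comp_measurable measurable_prodMk_left) C (fun y => hb _) R ?_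
        intro ℓ z z'
        have hupd : e.symm (x, Function.update z ℓ z')
            = Function.update (e.symm (x, z)) ((0 : Fin (n + 1)).succAbove ℓ) z' := by
          rw [hsymm, hsymm]
          exact insertNth_update_aux 0 x z ℓ z'
        simp only [hfdef, hupd]
        exact hdiff ((0 : Fin (n + 1)).succAbove ℓ) (e.symm (x, z)) z'
      · intro x x'
        have hupd : ∀ y, f (x', y) = Φ (Function.update (e.symm (x, y)) 0 x') := by
          intro y
          rw [hfdef]
          simp only [hsymm]
          rw [Fin.update_insertNth]
        have hint1 : Integrable (fun y => f (x, y)) π' :=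
          Integrable.mono' (integrable_const C)
            (hfmeas.comp_measurable measurable_prodMk_left).aestronglyMeasurable
            (ae_of_all _ fun y => hb _)
        have hint2 : Integrable (fun y => f (x', y)) π' :=
          Integrable.mono' (integrable_const C)
            (hfmeas.comp_measurable measurable_prodMk_left).aestronglyMeasurable
            (ae_of_all _ fun y => hb _)
        rw [(integral_sub hint1 hint2).symm]
        calc ‖∫ y, (f (x, y) - f (x', y)) ∂π'‖ ≤ R * (π' Set.univ).toReal := by
              refine norm_integral_le_of_norm_le_const (ae_of_all _ fun y => ?_)
              rw [hupd y]
              exact hdiff 0 (e.symm (x, y)) x'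
          _ = R := by rw [measure_univ, ENNReal.toReal_one, mul_one]
    calc ∫ p, ‖f p - ∫ p', f p' ∂(ν.prod π')‖ ^ 2 ∂(ν.prod π') ≤ n * R ^ 2 + R ^ 2 := key
      _ = (n + 1 : ℕ) * R ^ 2 := by push_cast; ring

end Aux

/-- **Bounded-differences variance bound, Hilbert space version.**
If `Φ` is a bounded measurable function of `n` independent random variables with values in a
real separable Hilbert space, whose value changes by at most `R` in norm when a single
coordinate is modified, then `E‖Φ(Z) − EΦ(Z)‖² ≤ n R²`. -/
theorem hilbert_mcdiarmid_expectation
    {Ω : Type*} [MeasureSpace Ω] [IsProbabilityMeasure (ℙ : Measure Ω)]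
    {H : Type*} [NormedAddCommGroup H] [InnerProductSpace ℝ H] [CompleteSpace H]
    [TopologicalSpace.SeparableSpace H]
    {n : ℕ} {E : Fin n → Type*} [mE : ∀ i, MeasurableSpace (E i)]
    (Φ : (∀ i, E i) → H) (hΦmeas : StronglyMeasurable Φ)
    (hΦbdd : ∃ C : ℝ, ∀ z, ‖Φ z‖ ≤ C)
    (R : ℝ)
    (hdiff : ∀ (ℓ : Fin n) (z : ∀ i, E i) (z' : E ℓ),
      ‖Φ z - Φ (Function.update z ℓ z')‖ ≤ R)
    (Z : ∀ i, Ω → E i) (hZmeas : ∀ i, Measurable (Z i))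
    (hindep : iIndepFun Z ℙ) :
    ∫ ω, ‖Φ (fun i => Z i ω) - ∫ ω', Φ (fun i => Z i ω') ∂ℙ‖ ^ 2 ∂ℙ ≤ n * R ^ 2 := by
  obtain ⟨C, hC⟩ := hΦbdd
  set g : Ω → ∀ i, E i := fun ω i => Z i ω with hgdef
  have hg : Measurable g := measurable_pi_lambda _ hZmeas
  haveI : ∀ i, IsProbabilityMeasure ((ℙ : Measure Ω).map (Z i)) :=
    fun i => Measure.isProbabilityMeasure_map (hZmeas i).aemeasurable
  have hmap : (ℙ : Measure Ω).map g = Measure.pi (fun i => (ℙ : Measure Ω).map (Z i)) := by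
    refine (Measure.pi_eq ?_).symm
    intro s hs
    rw [Measure.map_apply hg (MeasurableSet.univ_pi hs)]
    have hpre : g ⁻¹' Set.pi Set.univ s = ⋂ i ∈ Finset.univ, Z i ⁻¹' s i := by
      ext ω
      simp [hgdef, Set.mem_pi]
    rw [hpre, hindep.measure_inter_preimage_eq_mul Finset.univ (fun i _ => hs i)]
    exact Finset.prod_congr rfl fun i _ =>
      (Measure.map_apply (hZmeas i) (hs i)).symm
  have hmean : ∫ ω', Φ (fun i => Z i ω') ∂ℙ = ∫ x, Φ x ∂((ℙ : Measure Ω).map g) := by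
    rw [integral_map hg.aemeasurable hΦmeas.aestronglyMeasurable]
  rw [hmean]
  set m : H := ∫ x, Φ x ∂((ℙ : Measure Ω).map g) with hm
  have hsqmeas : StronglyMeasurable fun x => ‖Φ x - m‖ ^ 2 :=
    (continuous_pow 2).comp_stronglyMeasurable (hΦmeas.sub stronglyMeasurable_const).norm
  have hrw : ∫ ω, ‖Φ (fun i => Z i ω) - m‖ ^ 2 ∂ℙ
      = ∫ x, ‖Φ x - m‖ ^ 2 ∂((ℙ : Measure Ω).map g) := by
    rw [integral_map hg.aemeasurable hsqmeas.aestronglyMeasurable]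
  rw [hrw, hmap, hm, hmap]
  exact pi_mcdiarmid n E mE (fun i => (ℙ : Measure Ω).map (Z i))
    (fun i => inferInstance) Φ hΦmeas C hC R hdiff
end

section
/- Let 𝓗 be a real separable Hilbert space, let E₁,…,Eₙ be measurable spaces and let Φ : E₁×…×Eₙ → 𝓗 be a bounded measurable function such that for every index ℓ and all choices of coordinates z₁,…,zₙ and z′_ℓ one has ‖Φ(z₁,…,z_ℓ,…,zₙ) − Φ(z₁,…,z′_ℓ,…,zₙ)‖_𝓗 ≤ R. If Z₁,…,Zₙ are independent random variables with Zᵢ taking values in Eᵢ, then for every ξ > 0, P(‖Φ(Z₁,…,Zₙ) − E[Φ(Z₁,…,Zₙ)]‖_𝓗 > ξ + R√n) ≤ exp(−2ξ²/(nR²)). -/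
open MeasureTheory ProbabilityTheory

section McdAux

open Real MeasureTheory ProbabilityTheory

universe u

lemma mcd_phi_ineq {p : ℝ} (hp0 : 0 ≤ p) (hp1 : p ≤ 1) (u : ℝ) :
    (1 - p) * Real.exp (-(p * u)) + p * Real.exp ((1 - p) * u) ≤ Real.exp (u ^ 2 / 8) := by
  set d : ℝ → ℝ := fun u => 1 - p + p * Real.exp u with hd_def
  have hd : ∀ u, 0 < d u := by
    intro u
    rcases lt_or_eq_of_le hp1 with h | h
    · have h1 : 0 < 1 - p := by linarith
      have h2 : 0 ≤ p * Real.exp u := mul_nonneg hp0 (Real.exp_pos u).le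
      simp only [hd_def]; linarith
    · subst h; simpa [hd_def] using Real.exp_pos u
  have hd' : ∀ u, HasDerivAt d (p * Real.exp u) u := fun u =>
    ((Real.hasDerivAt_exp u).const_mul p).const_add (1 - p)
  set V : ℝ → ℝ := fun u => p * Real.exp u / d u with hV_def
  have hV' : ∀ u, HasDerivAt V (V u * (1 - V u)) u := by
    intro u
    have h := ((Real.hasDerivAt_exp u).const_mul p).div (hd' u) (hd u).ne'
    convert h using 1
    any_goals rfl
    have hne := (hd u).ne'
    simp only [hV_def]
    field_simp
  set F : ℝ → ℝ := fun u => Real.log (d u) - p * u with hF_def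
  have hF' : ∀ u, HasDerivAt F (V u - p) u := by
    intro u
    have h1 := (hd' u).log (hd u).ne'
    have h2 : HasDerivAt (fun u : ℝ => p * u) p u := by
      simpa using (hasDerivAt_id u).const_mul p
    exact h1.sub h2
  set G1 : ℝ → ℝ := fun u => u / 4 + p - V u with hG1_def
  have hG1' : ∀ u, HasDerivAt G1 (1 / 4 - V u * (1 - V u)) u := by
    intro u
    have h1 : HasDerivAt (fun u : ℝ => u / 4 + p) (1 / 4) u := by
      simpa using ((hasDerivAt_id u).div_const 4).add_const p
    exact h1.sub (hV' u)
  have hG1mono : Monotone G1 :=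
    monotone_of_hasDerivAt_nonneg hG1' (by
      intro u
      simp only [Pi.zero_apply]
      nlinarith [sq_nonneg (V u - 1/2)])
  have hV0 : V 0 = p := by simp [hV_def, hd_def]
  have hG10 : G1 0 = 0 := by simp [hG1_def, hV0]
  set G : ℝ → ℝ := fun u => u ^ 2 / 8 - F u with hG_def
  have hG' : ∀ u, HasDerivAt G (G1 u) u := by
    intro u
    have h1 : HasDerivAt (fun u : ℝ => u ^ 2 / 8) (u / 4) u := by
      have := (hasDerivAt_pow 2 u).div_const 8
      convert this using 1; any_goals rfl
      push_cast; ring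
    have := h1.sub (hF' u)
    convert this using 1; any_goals rfl
    simp only [hG1_def]; ring
  have hG0 : G 0 = 0 := by simp [hG_def, hF_def, hd_def]
  have hGnonneg : ∀ u, 0 ≤ G u := by
    intro u
    rcases le_total 0 u with h | h
    · have hmono : MonotoneOn G (Set.Ici 0) :=
        monotoneOn_of_hasDerivWithinAt_nonneg (convex_Ici 0)
          (fun x _ => (hG' x).continuousAt.continuousWithinAt)
          (fun x hx => (hG' x).hasDerivWithinAt)
          (fun x hx => by
            rw [interior_Ici] at hx
            have := hG1mono (le_of_lt hx)
            rw [hG10] at this; exact this)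
      have := hmono (Set.self_mem_Ici) (Set.mem_Ici.2 h) h
      rwa [hG0] at this
    · have hanti : AntitoneOn G (Set.Iic 0) :=
        antitoneOn_of_hasDerivWithinAt_nonpos (convex_Iic 0)
          (fun x _ => (hG' x).continuousAt.continuousWithinAt)
          (fun x hx => (hG' x).hasDerivWithinAt)
          (fun x hx => by
            rw [interior_Iic] at hx
            have := hG1mono (le_of_lt hx)
            rw [hG10] at this; exact this)
      have := hanti (Set.mem_Iic.2 h) (Set.self_mem_Iic) h
      rwa [hG0] at this
  have hFle : F u ≤ u ^ 2 / 8 := by have := hGnonneg u; simp only [hG_def] at this; linarith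
  calc (1 - p) * Real.exp (-(p * u)) + p * Real.exp ((1 - p) * u)
      = Real.exp (F u) := by
        rw [hF_def]
        simp only []
        rw [Real.exp_sub, Real.exp_log (hd u)]
        rw [show (1 - p) * u = u - p * u by ring, Real.exp_sub]
        simp only [hd_def]
        field_simp [Real.exp_ne_zero]
        rw [mul_assoc, show Real.exp (-(p*u)) * Real.exp (p*u) = 1 by rw [← Real.exp_add]; simp, mul_one]
    _ ≤ Real.exp (u ^ 2 / 8) := Real.exp_le_exp.2 hFle

lemma mcd_hoeffding {α : Type*} [MeasurableSpace α] (μ : Measure α) [IsProbabilityMeasure μ]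
    (g : α → ℝ) (hg : Measurable g) (a b t : ℝ)
    (hab : ∀ x, g x ∈ Set.Icc a b) :
    ∫ x, Real.exp (t * g x) ∂μ ≤ Real.exp (t * ∫ x, g x ∂μ + t ^ 2 * (b - a) ^ 2 / 8) := by
  have hα : Nonempty α := by
    by_contra h
    rw [not_nonempty_iff] at h
    have := measure_univ (μ := μ)
    simp [Set.univ_eq_empty_iff.2 h] at this
  obtain ⟨x₀⟩ := hα
  have hba : a ≤ b := le_trans (hab x₀).1 (hab x₀).2
  -- integrability
  have hgi : Integrable g μ := by
    refine Integrable.mono' (integrable_const (max |a| |b|)) hg.aestronglyMeasurable ?_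
    filter_upwards with x
    rw [Real.norm_eq_abs, abs_le]
    constructor
    · have := (hab x).1
      have : -(max |a| |b|) ≤ a := by
        have := neg_abs_le a
        have := le_max_left |a| |b|
        linarith [(hab x).1]
      linarith [(hab x).1]
    · have h1 : b ≤ |b| := le_abs_self b
      have h2 : |b| ≤ max |a| |b| := le_max_right _ _
      linarith [(hab x).2]
  have hexpi : Integrable (fun x => Real.exp (t * g x)) μ := by
    refine Integrable.mono' (integrable_const (Real.exp (|t| * max |a| |b|)))
      (Real.measurable_exp.comp (hg.const_mul t)).aestronglyMeasurable ?_
    filter_upwards with x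
    rw [Real.norm_eq_abs, abs_of_pos (Real.exp_pos _), Real.exp_le_exp]
    calc t * g x ≤ |t * g x| := le_abs_self _
      _ = |t| * |g x| := abs_mul _ _
      _ ≤ |t| * max |a| |b| := by
          refine mul_le_mul_of_nonneg_left ?_ (abs_nonneg t)
          rw [abs_le]
          constructor
          · have : -(max |a| |b|) ≤ a := by
              have := neg_abs_le a; have := le_max_left |a| |b|; linarith
            linarith [(hab x).1]
          · have h1 : b ≤ |b| := le_abs_self b
            have h2 : |b| ≤ max |a| |b| := le_max_right _ _
            linarith [(hab x).2]
  set m := ∫ x, g x ∂μ with hm_def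
  have hma : a ≤ m := by
    calc a = ∫ _, a ∂μ := by simp
      _ ≤ m := integral_mono (integrable_const a) hgi (fun x => (hab x).1)
  have hmb : m ≤ b := by
    calc m ≤ ∫ _, b ∂μ := integral_mono hgi (integrable_const b) (fun x => (hab x).2)
      _ = b := by simp
  rcases eq_or_lt_of_le hba with h | hba'
  · -- a = b: g is constant
    subst h
    have hgx : ∀ x, g x = a := fun x => le_antisymm (hab x).2 (hab x).1
    have : ∀ x, Real.exp (t * g x) = Real.exp (t * a) := fun x => by rw [hgx x]
    rw [integral_congr_ae (Filter.Eventually.of_forall this), integral_const]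
    have hm : m = a := by
      rw [hm_def, integral_congr_ae (Filter.Eventually.of_forall
        (fun x => hgx x : ∀ x, g x = (fun _ => a) x)), integral_const]
      simp
    rw [hm]
    simp [Real.exp_le_exp]
  · -- a < b
    have hne : b - a ≠ 0 := by linarith
    set c1 := (b * Real.exp (t * a) - a * Real.exp (t * b)) / (b - a) with hc1
    set c2 := (Real.exp (t * b) - Real.exp (t * a)) / (b - a) with hc2
    have hptw : ∀ x, Real.exp (t * g x) ≤ c1 + c2 * g x := by
      intro x
      have h1 := (hab x).1
      have h2 := (hab x).2
      have θ1 : (0:ℝ) ≤ (b - g x) / (b - a) := div_nonneg (by linarith) (by linarith)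
      have θ2 : (0:ℝ) ≤ (g x - a) / (b - a) := div_nonneg (by linarith) (by linarith)
      have hsum : (b - g x) / (b - a) + (g x - a) / (b - a) = 1 := by field_simp; ring
      have hcvx := convexOn_exp.2 (Set.mem_univ (t * a)) (Set.mem_univ (t * b)) θ1 θ2 hsum
      simp only [smul_eq_mul] at hcvx
      have harg : (b - g x) / (b - a) * (t * a) + (g x - a) / (b - a) * (t * b) = t * g x := by
        field_simp; ring
      rw [harg] at hcvx
      refine hcvx.trans (le_of_eq ?_)
      rw [hc1, hc2]
      field_simp
      ring
    set p := (m - a) / (b - a) with hp_def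
    set u := t * (b - a) with hu_def
    have hp0 : 0 ≤ p := div_nonneg (by linarith) (by linarith)
    have hp1 : p ≤ 1 := (div_le_one (by linarith)).2 (by linarith)
    have e1 : Real.exp (t * m) * Real.exp (-(p * u)) = Real.exp (t * a) := by
      rw [← Real.exp_add]; congr 1; rw [hp_def, hu_def]; field_simp; ring
    have e2 : Real.exp (t * m) * Real.exp ((1 - p) * u) = Real.exp (t * b) := by
      rw [← Real.exp_add]; congr 1; rw [hp_def, hu_def]; field_simp; ring
    calc ∫ x, Real.exp (t * g x) ∂μ
        ≤ ∫ x, (c1 + c2 * g x) ∂μ :=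
          integral_mono hexpi ((integrable_const c1).add (hgi.const_mul c2)) hptw
      _ = c1 + c2 * m := by
          rw [integral_add (integrable_const c1) (hgi.const_mul c2), integral_const,
            integral_const_mul]
          simp [hm_def]
      _ = (1 - p) * (Real.exp (t * m) * Real.exp (-(p * u)))
            + p * (Real.exp (t * m) * Real.exp ((1 - p) * u)) := by
          rw [e1, e2, hc1, hc2, hp_def]
          field_simp
          ring
      _ = Real.exp (t * m) * ((1 - p) * Real.exp (-(p * u)) + p * Real.exp ((1 - p) * u)) := by
          ring
      _ ≤ Real.exp (t * m) * Real.exp (u ^ 2 / 8) :=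
          mul_le_mul_of_nonneg_left (mcd_phi_ineq hp0 hp1 u) (Real.exp_pos _).le
      _ = Real.exp (t * m + t ^ 2 * (b - a) ^ 2 / 8) := by
          rw [← Real.exp_add]; congr 1; rw [hu_def]; ring

lemma mcd_nonempty {α : Type*} [MeasurableSpace α] (μ : Measure α) [IsProbabilityMeasure μ] :
    Nonempty α := by
  by_contra h
  rw [not_nonempty_iff] at h
  have := measure_univ (μ := μ)
  simp [Set.univ_eq_empty_iff.2 h] at this

lemma mcd_integrable {α G : Type*} [MeasurableSpace α] [NormedAddCommGroup G]
    (μ : Measure α) [IsFiniteMeasure μ] {F : α → G} (hF : AEStronglyMeasurable F μ)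
    (C : ℝ) (hC : ∀ x, ‖F x‖ ≤ C) : Integrable F μ :=
  Integrable.mono' (integrable_const C) hF (Filter.Eventually.of_forall hC)

lemma mcd_insertNth_update {n : ℕ} {E : Fin (n+1) → Type*} (i : Fin (n+1))
    (y : E i) (x : ∀ j, E (i.succAbove j)) (j : Fin n) (x' : E (i.succAbove j)) :
    Fin.insertNth i y (Function.update x j x') =
      Function.update (Fin.insertNth i y x) (i.succAbove j) x' := by
  ext k
  refine Fin.succAboveCases i ?_ ?_ k
  · rw [Fin.insertNth_apply_same,
      Function.update_of_ne (Fin.succAbove_ne i j).symm, Fin.insertNth_apply_same]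
  · intro m
    rw [Fin.insertNth_apply_succAbove]
    rcases eq_or_ne m j with rfl | hmj
    · rw [Function.update_self, Function.update_self]
    · rw [Function.update_of_ne hmj, Function.update_of_ne
        (fun h => hmj (Fin.succAbove_right_injective h)), Fin.insertNth_apply_succAbove]


theorem mcd_mgf_pi (t c : ℝ) :
    ∀ (n : ℕ) (E : Fin n → Type u) (mE : ∀ i, MeasurableSpace (E i))
      (μ : ∀ i, Measure (E i)) (hμ : ∀ i, IsProbabilityMeasure (μ i))
      (f : (∀ i, E i) → ℝ) (hf : Measurable f) (C : ℝ) (hC : ∀ z, |f z| ≤ C)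
      (hd : ∀ (ℓ : Fin n) (z : ∀ i, E i) (z' : E ℓ), |f z - f (Function.update z ℓ z')| ≤ c),
      ∫ z, Real.exp (t * f z) ∂(Measure.pi μ) ≤
        Real.exp (t * ∫ z, f z ∂(Measure.pi μ) + t ^ 2 * n * c ^ 2 / 8) := by
  intro n
  induction n with
  | zero =>
    intro E mE μ hμ f hf C hC hd
    haveI := hμ
    have hz : ∀ z : ∀ i, E i, z = (default : ∀ i, E i) := fun z => Subsingleton.elim _ _
    have h1 : ∫ z, Real.exp (t * f z) ∂(Measure.pi μ) = Real.exp (t * f default) := by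
      rw [integral_congr_ae (Filter.Eventually.of_forall
        (fun z => by rw [hz z] : ∀ z, Real.exp (t * f z) = Real.exp (t * f default))),
        integral_const]
      simp
    have h2 : ∫ z, f z ∂(Measure.pi μ) = f default := by
      rw [integral_congr_ae (Filter.Eventually.of_forall
        (fun z => by rw [hz z] : ∀ z, f z = f default)), integral_const]
      simp
    rw [h1, h2]
    simp
  | succ n ih =>
    intro E mE μ hμ f hf C hC hd
    haveI := hμ
    set i0 : Fin (n+1) := 0
    set e := MeasurableEquiv.piFinSuccAbove E i0 with he
    set ν := fun j : Fin n => μ (i0.succAbove j) with hν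
    haveI : ∀ j, IsProbabilityMeasure (ν j) := fun j => hμ _
    have hMP : MeasurePreserving e (Measure.pi μ) ((μ i0).prod (Measure.pi ν)) :=
      measurePreserving_piFinSuccAbove μ i0
    have hsymm : ∀ (y : E i0) (x : ∀ j, E (i0.succAbove j)),
        e.symm (y, x) = Fin.insertNth i0 y x := fun y x => rfl
    have hcomp : ∀ (F : (∀ i, E i) → ℝ), Measurable F →
        ∫ z, F z ∂(Measure.pi μ) = ∫ w, F (e.symm w) ∂((μ i0).prod (Measure.pi ν)) := by
      intro F hF
      rw [← (hMP.symm e).integral_comp e.symm.measurableEmbedding]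
    set g : (∀ j, E (i0.succAbove j)) → E i0 → ℝ := fun x y => f (Fin.insertNth i0 y x) with hg
    have hgm : Measurable (fun w : E i0 × ∀ j, E (i0.succAbove j) => f (e.symm w)) :=
      hf.comp e.symm.measurable
    have hgxm : ∀ x, Measurable (fun y => g x y) := by
      intro x
      exact hgm.comp (measurable_id.prodMk measurable_const)
    have hgC : ∀ x y, |g x y| ≤ C := fun x y => hC _
    set G : (∀ j, E (i0.succAbove j)) → ℝ := fun x => ∫ y, g x y ∂(μ i0) with hG
    have hGsm : StronglyMeasurable G := hgm.stronglyMeasurable.integral_prod_left'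
    have hGC : ∀ x, |G x| ≤ C := by
      intro x
      have := norm_integral_le_of_norm_le_const (μ := μ i0) (C := C)
        (Filter.Eventually.of_forall (fun y => by
          rw [Real.norm_eq_abs]; exact hgC x y))
      simpa using this
    have hGd : ∀ (j : Fin n) (x : ∀ j, E (i0.succAbove j)) (x' : E (i0.succAbove j)),
        |G x - G (Function.update x j x')| ≤ c := by
      intro j x x'
      have hsub : G x - G (Function.update x j x')
          = ∫ y, (g x y - g (Function.update x j x') y) ∂(μ i0) := by
        rw [integral_sub (mcd_integrable _ (hgxm x).aestronglyMeasurable C (fun y => by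
            rw [Real.norm_eq_abs]; exact hgC x y))
          (mcd_integrable _ (hgxm _).aestronglyMeasurable C (fun y => by
            rw [Real.norm_eq_abs]; exact hgC _ y))]
      rw [hsub]
      have := norm_integral_le_of_norm_le_const (μ := μ i0) (C := c)
        (Filter.Eventually.of_forall (fun y => by
          rw [Real.norm_eq_abs]
          have h1 := hd (i0.succAbove j) (Fin.insertNth i0 y x) x'
          rw [← mcd_insertNth_update] at h1
          exact h1))
      simpa [hg] using this
    haveI : Nonempty (E i0) := mcd_nonempty (μ i0)
    -- the inner Hoeffding bound
    have hinner : ∀ x, ∫ y, Real.exp (t * g x y) ∂(μ i0) ≤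
        Real.exp (t * G x + t ^ 2 * c ^ 2 / 8) := by
      intro x
      have hbdd : BddBelow (Set.range fun y => g x y) := by
        refine ⟨-C, ?_⟩
        rintro _ ⟨y, rfl⟩
        have := (abs_le.1 (hgC x y)).1
        linarith
      set a : ℝ := ⨅ y, g x y with ha
      have hal : ∀ y, a ≤ g x y := fun y => ciInf_le hbdd y
      have hau : ∀ y, g x y ≤ a + c := by
        intro y
        have h2 : ∀ y', g x y - c ≤ g x y' := by
          intro y'
          have h3 := hd i0 (Fin.insertNth i0 y x) y'
          rw [Fin.update_insertNth] at h3
          have h5 := (abs_le.1 h3).2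
          simp only [hg]
          linarith
        have h4 : g x y - c ≤ a := le_ciInf h2
        linarith
      have hH := mcd_hoeffding (μ i0) (fun y => g x y) (hgxm x) a (a + c) t
        (fun y => ⟨hal y, hau y⟩)
      have : a + c - a = c := by ring
      rw [this] at hH
      exact hH
    -- integrability on the product
    have hintF : Integrable (fun w => Real.exp (t * f (e.symm w)))
        ((μ i0).prod (Measure.pi ν)) := by
      refine mcd_integrable _ (Real.measurable_exp.comp
        (hgm.const_mul t)).aestronglyMeasurable (Real.exp (|t| * C)) ?_
      intro w
      rw [Real.norm_eq_abs, abs_of_pos (Real.exp_pos _), Real.exp_le_exp]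
      calc t * f (e.symm w) ≤ |t * f (e.symm w)| := le_abs_self _
        _ = |t| * |f (e.symm w)| := abs_mul _ _
        _ ≤ |t| * C := mul_le_mul_of_nonneg_left (hC _) (abs_nonneg t)
    have hintf : Integrable (fun w => f (e.symm w)) ((μ i0).prod (Measure.pi ν)) :=
      mcd_integrable _ hgm.aestronglyMeasurable C (fun w => by
        rw [Real.norm_eq_abs]; exact hC _)
    have hfpi : ∫ z, f z ∂(Measure.pi μ) = ∫ x, G x ∂(Measure.pi ν) := by
      rw [hcomp f hf, integral_prod_symm _ hintf]
      rfl
    have hkey : ∫ z, Real.exp (t * f z) ∂(Measure.pi μ)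
        = ∫ x, (∫ y, Real.exp (t * g x y) ∂(μ i0)) ∂(Measure.pi ν) := by
      rw [hcomp (fun z => Real.exp (t * f z))
        (show Measurable fun z => Real.exp (t * f z) from
          Real.measurable_exp.comp (hf.const_mul t)), integral_prod_symm _ hintF]
      rfl
    rw [hkey, hfpi]
    have hint1 : Integrable (fun x => ∫ y, Real.exp (t * g x y) ∂(μ i0)) (Measure.pi ν) :=
      hintF.integral_prod_right
    have hint2 : Integrable (fun x => Real.exp (t * G x + t ^ 2 * c ^ 2 / 8))
        (Measure.pi ν) := by
      refine mcd_integrable _ (Real.continuous_exp.comp_stronglyMeasurable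
        ((hGsm.const_mul t).add_const _)).aestronglyMeasurable
        (Real.exp (|t| * C + t ^ 2 * c ^ 2 / 8)) ?_
      intro x
      rw [Real.norm_eq_abs, abs_of_pos (Real.exp_pos _), Real.exp_le_exp]
      have : t * G x ≤ |t| * C := by
        calc t * G x ≤ |t * G x| := le_abs_self _
          _ = |t| * |G x| := abs_mul _ _
          _ ≤ |t| * C := mul_le_mul_of_nonneg_left (hGC _) (abs_nonneg t)
      linarith
    calc ∫ x, (∫ y, Real.exp (t * g x y) ∂(μ i0)) ∂(Measure.pi ν)
        ≤ ∫ x, Real.exp (t * G x + t ^ 2 * c ^ 2 / 8) ∂(Measure.pi ν) :=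
          integral_mono hint1 hint2 hinner
      _ = Real.exp (t ^ 2 * c ^ 2 / 8) * ∫ x, Real.exp (t * G x) ∂(Measure.pi ν) := by
          simp_rw [Real.exp_add]
          rw [integral_mul_const]
          ring
      _ ≤ Real.exp (t ^ 2 * c ^ 2 / 8)
            * Real.exp (t * ∫ x, G x ∂(Measure.pi ν) + t ^ 2 * n * c ^ 2 / 8) :=
          mul_le_mul_of_nonneg_left
            (ih _ _ ν (fun j => hμ _) G hGsm.measurable C hGC hGd) (Real.exp_pos _).le
      _ = Real.exp (t * ∫ x, G x ∂(Measure.pi ν) + t ^ 2 * ↑(n + 1) * c ^ 2 / 8) := by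
          rw [← Real.exp_add]
          congr 1
          push_cast
          ring

lemma mcd_one_step {α H : Type*} [MeasurableSpace α] [NormedAddCommGroup H]
    [InnerProductSpace ℝ H] [CompleteSpace H]
    (μ : Measure α) [IsProbabilityMeasure μ] (A : α → H)
    (hA : StronglyMeasurable A) (C : ℝ) (hC : ∀ y, ‖A y‖ ≤ C) (R : ℝ)
    (hR : ∀ y y', ‖A y - A y'‖ ≤ R) (cH : H) :
    ∫ y, ‖A y - cH‖ ^ 2 ∂μ ≤ R ^ 2 + ‖(∫ y, A y ∂μ) - cH‖ ^ 2 := by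
  haveI : Nonempty α := mcd_nonempty μ
  have hAi : Integrable A μ := mcd_integrable μ hA.aestronglyMeasurable C hC
  set Ab := ∫ y, A y ∂μ with hAb
  have hR0 : 0 ≤ R := le_trans (norm_nonneg _) (hR Classical.ofNonempty Classical.ofNonempty)
  -- deviation bound
  have hdev : ∀ y, ‖A y - Ab‖ ≤ R := by
    intro y
    have h1 : A y - Ab = ∫ y', (A y - A y') ∂μ := by
      rw [integral_sub (integrable_const (A y)) hAi, integral_const]
      simp [hAb]
    rw [h1]
    have := norm_integral_le_of_norm_le_const (μ := μ) (C := R)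
      (Filter.Eventually.of_forall (fun y' => hR y y'))
    simpa using this
  have hsubi : Integrable (fun y => A y - Ab) μ := hAi.sub (integrable_const _)
  -- pointwise decomposition
  have hptw : ∀ y, ‖A y - cH‖ ^ 2 =
      ‖A y - Ab‖ ^ 2 + (2 * inner ℝ (A y - Ab) (Ab - cH) + ‖Ab - cH‖ ^ 2) := by
    intro y
    have : A y - cH = (A y - Ab) + (Ab - cH) := by abel
    rw [this, @norm_add_sq_real]
    ring
  have hi1 : Integrable (fun y => ‖A y - Ab‖ ^ 2) μ := by
    refine mcd_integrable μ ?_ ((C + ‖Ab‖) ^ 2) ?_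
    · exact ((hA.sub stronglyMeasurable_const).norm.measurable.pow_const 2).aestronglyMeasurable
    · intro y
      rw [Real.norm_eq_abs, abs_of_nonneg (by positivity)]
      have h1 : ‖A y - Ab‖ ≤ C + ‖Ab‖ := le_trans (norm_sub_le _ _) (by linarith [hC y])
      have h2 : 0 ≤ ‖A y - Ab‖ := norm_nonneg _
      nlinarith
  have hinni : Integrable (fun y => (inner ℝ (A y - Ab) (Ab - cH) : ℝ)) μ := by
    refine mcd_integrable μ ?_ ((C + ‖Ab‖) * ‖Ab - cH‖) ?_
    · exact ((hA.sub stronglyMeasurable_const).inner stronglyMeasurable_const).aestronglyMeasurable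
    · intro y
      rw [Real.norm_eq_abs]
      refine le_trans (abs_real_inner_le_norm _ _) ?_
      refine mul_le_mul_of_nonneg_right ?_ (norm_nonneg _)
      exact le_trans (norm_sub_le _ _) (by linarith [hC y])
  have hi2 : Integrable (fun y => 2 * inner ℝ (A y - Ab) (Ab - cH) + ‖Ab - cH‖ ^ 2) μ :=
    (hinni.const_mul 2).add (integrable_const _)
  have hinner0 : ∫ y, (inner ℝ (A y - Ab) (Ab - cH) : ℝ) ∂μ = 0 := by
    have h1 : ∀ y, (inner ℝ (A y - Ab) (Ab - cH) : ℝ) = inner ℝ (Ab - cH) (A y - Ab) :=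
      fun y => real_inner_comm _ _
    rw [integral_congr_ae (Filter.Eventually.of_forall h1), integral_inner hsubi]
    have : ∫ y, (A y - Ab) ∂μ = 0 := by
      rw [integral_sub hAi (integrable_const _), integral_const]
      simp [hAb]
    rw [this, inner_zero_right]
  calc ∫ y, ‖A y - cH‖ ^ 2 ∂μ
      = ∫ y, (‖A y - Ab‖ ^ 2 + (2 * inner ℝ (A y - Ab) (Ab - cH) + ‖Ab - cH‖ ^ 2)) ∂μ :=
        integral_congr_ae (Filter.Eventually.of_forall hptw)
    _ = (∫ y, ‖A y - Ab‖ ^ 2 ∂μ)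
          + ∫ y, (2 * inner ℝ (A y - Ab) (Ab - cH) + ‖Ab - cH‖ ^ 2) ∂μ :=
        integral_add hi1 hi2
    _ ≤ R ^ 2 + ‖Ab - cH‖ ^ 2 := by
        have h1 : ∫ y, ‖A y - Ab‖ ^ 2 ∂μ ≤ R ^ 2 := by
          have := integral_mono hi1 (integrable_const (R ^ 2)) (fun y => by
            have := hdev y
            have h2 : (0:ℝ) ≤ ‖A y - Ab‖ := norm_nonneg _
            nlinarith)
          simpa using this
        have h2 : ∫ y, (2 * inner ℝ (A y - Ab) (Ab - cH) + ‖Ab - cH‖ ^ 2) ∂μ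
            = ‖Ab - cH‖ ^ 2 := by
          rw [integral_add (hinni.const_mul 2) (integrable_const _), integral_const_mul,
            hinner0]
          simp
        rw [h2]
        linarith




theorem mcd_var_pi {H : Type*} [NormedAddCommGroup H] [InnerProductSpace ℝ H]
    [CompleteSpace H] (R : ℝ) :
    ∀ (n : ℕ) (E : Fin n → Type u) (mE : ∀ i, MeasurableSpace (E i))
      (μ : ∀ i, Measure (E i)) (hμ : ∀ i, IsProbabilityMeasure (μ i))
      (Φ : (∀ i, E i) → H) (hΦ : StronglyMeasurable Φ) (C : ℝ) (hC : ∀ z, ‖Φ z‖ ≤ C)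
      (hd : ∀ (ℓ : Fin n) (z : ∀ i, E i) (z' : E ℓ), ‖Φ z - Φ (Function.update z ℓ z')‖ ≤ R),
      ∫ z, ‖Φ z - ∫ w, Φ w ∂(Measure.pi μ)‖ ^ 2 ∂(Measure.pi μ) ≤ n * R ^ 2 := by
  intro n
  induction n with
  | zero =>
    intro E mE μ hμ Φ hΦ C hC hd
    haveI := hμ
    have hz : ∀ z : ∀ i, E i, z = (default : ∀ i, E i) := fun z => Subsingleton.elim _ _
    have h2 : ∫ w, Φ w ∂(Measure.pi μ) = Φ default := by
      rw [integral_congr_ae (Filter.Eventually.of_forall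
        (fun z => by rw [hz z] : ∀ z, Φ z = Φ default)), integral_const]
      simp
    have h1 : ∫ z, ‖Φ z - ∫ w, Φ w ∂(Measure.pi μ)‖ ^ 2 ∂(Measure.pi μ) = 0 := by
      rw [h2, integral_congr_ae (Filter.Eventually.of_forall
        (fun z => by rw [hz z]; simp :
          ∀ z, ‖Φ z - Φ default‖ ^ 2 = (0:ℝ)))]
      simp
    rw [h1]
    simp
  | succ n ih =>
    intro E mE μ hμ Φ hΦ C hC hd
    haveI := hμ
    set i0 : Fin (n+1) := 0
    set e := MeasurableEquiv.piFinSuccAbove E i0 with he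
    set ν := fun j : Fin n => μ (i0.succAbove j) with hν
    haveI : ∀ j, IsProbabilityMeasure (ν j) := fun j => hμ _
    have hMP : MeasurePreserving e (Measure.pi μ) ((μ i0).prod (Measure.pi ν)) :=
      measurePreserving_piFinSuccAbove μ i0
    have hgsm : StronglyMeasurable (fun w : E i0 × ∀ j, E (i0.succAbove j) => Φ (e.symm w)) :=
      hΦ.comp_measurable e.symm.measurable
    have hgxsm : ∀ x, StronglyMeasurable (fun y => Φ (Fin.insertNth i0 y x)) := by
      intro x
      exact hgsm.comp_measurable (measurable_id.prodMk measurable_const)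
    set G : (∀ j, E (i0.succAbove j)) → H := fun x => ∫ y, Φ (Fin.insertNth i0 y x) ∂(μ i0)
      with hG
    have hGsm : StronglyMeasurable G := hgsm.integral_prod_left'
    have hGC : ∀ x, ‖G x‖ ≤ C := by
      intro x
      have := norm_integral_le_of_norm_le_const (μ := μ i0) (C := C)
        (Filter.Eventually.of_forall (fun y => hC (Fin.insertNth i0 y x)))
      simpa using this
    have hGd : ∀ (j : Fin n) (x : ∀ j, E (i0.succAbove j)) (x' : E (i0.succAbove j)),
        ‖G x - G (Function.update x j x')‖ ≤ R := by
      intro j x x'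
      have hsub : G x - G (Function.update x j x')
          = ∫ y, (Φ (Fin.insertNth i0 y x)
              - Φ (Fin.insertNth i0 y (Function.update x j x'))) ∂(μ i0) := by
        rw [integral_sub (mcd_integrable _ (hgxsm x).aestronglyMeasurable C (fun y => hC _))
          (mcd_integrable _ (hgxsm _).aestronglyMeasurable C (fun y => hC _))]
      rw [hsub]
      have := norm_integral_le_of_norm_le_const (μ := μ i0) (C := R)
        (Filter.Eventually.of_forall (fun y => by
          have h1 := hd (i0.succAbove j) (Fin.insertNth i0 y x) x'
          rw [← mcd_insertNth_update] at h1
          exact h1))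
      simpa using this
    haveI : Nonempty (E i0) := mcd_nonempty (μ i0)
    set m : H := ∫ w, Φ w ∂(Measure.pi μ) with hm
    -- integrability on the product
    have hintΦ : Integrable (fun w => Φ (e.symm w)) ((μ i0).prod (Measure.pi ν)) :=
      mcd_integrable _ hgsm.aestronglyMeasurable C (fun w => hC _)
    have hintF : Integrable (fun w => ‖Φ (e.symm w) - m‖ ^ 2) ((μ i0).prod (Measure.pi ν)) := by
      refine mcd_integrable _
        (((hgsm.sub stronglyMeasurable_const).norm.measurable.pow_const 2).aestronglyMeasurable)
        ((C + ‖m‖) ^ 2) ?_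
      intro w
      rw [Real.norm_eq_abs, abs_of_nonneg (by positivity)]
      have h1 : ‖Φ (e.symm w) - m‖ ≤ C + ‖m‖ := le_trans (norm_sub_le _ _) (by linarith [hC (e.symm w)])
      have h2 : (0:ℝ) ≤ ‖Φ (e.symm w) - m‖ := norm_nonneg _
      nlinarith
    -- transfer: Bochner mean
    have hmG : m = ∫ x, G x ∂(Measure.pi ν) := by
      rw [hm, ← (hMP.symm e).integral_comp e.symm.measurableEmbedding Φ,
        integral_prod_symm _ hintΦ]
      rfl
    -- transfer: the variance integral
    have hkey : ∫ z, ‖Φ z - m‖ ^ 2 ∂(Measure.pi μ)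
        = ∫ x, (∫ y, ‖Φ (Fin.insertNth i0 y x) - m‖ ^ 2 ∂(μ i0)) ∂(Measure.pi ν) := by
      rw [← (hMP.symm e).integral_comp e.symm.measurableEmbedding
        (fun z => ‖Φ z - m‖ ^ 2), integral_prod_symm _ hintF]
      rfl
    rw [hkey]
    -- inner bound
    have hinner : ∀ x, ∫ y, ‖Φ (Fin.insertNth i0 y x) - m‖ ^ 2 ∂(μ i0)
        ≤ R ^ 2 + ‖G x - m‖ ^ 2 := by
      intro x
      refine mcd_one_step (μ i0) _ (hgxsm x) C (fun y => hC _) R ?_ m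
      intro y y'
      have h1 := hd i0 (Fin.insertNth i0 y x) y'
      rw [Fin.update_insertNth] at h1
      exact h1
    have hint1 : Integrable (fun x => ∫ y, ‖Φ (Fin.insertNth i0 y x) - m‖ ^ 2 ∂(μ i0))
        (Measure.pi ν) := hintF.integral_prod_right
    have hint3 : Integrable (fun x => ‖G x - m‖ ^ 2) (Measure.pi ν) := by
      refine mcd_integrable _
        (((hGsm.sub stronglyMeasurable_const).norm.measurable.pow_const 2).aestronglyMeasurable)
        ((C + ‖m‖) ^ 2) ?_
      intro x
      rw [Real.norm_eq_abs, abs_of_nonneg (by positivity)]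
      have h1 : ‖G x - m‖ ≤ C + ‖m‖ := le_trans (norm_sub_le _ _) (by linarith [hGC x])
      have h2 : (0:ℝ) ≤ ‖G x - m‖ := norm_nonneg _
      nlinarith
    have hint2 : Integrable (fun x => R ^ 2 + ‖G x - m‖ ^ 2) (Measure.pi ν) :=
      (integrable_const (R ^ 2)).add hint3
    calc ∫ x, (∫ y, ‖Φ (Fin.insertNth i0 y x) - m‖ ^ 2 ∂(μ i0)) ∂(Measure.pi ν)
        ≤ ∫ x, (R ^ 2 + ‖G x - m‖ ^ 2) ∂(Measure.pi ν) :=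
          integral_mono hint1 hint2 hinner
      _ = R ^ 2 + ∫ x, ‖G x - m‖ ^ 2 ∂(Measure.pi ν) := by
          rw [integral_add (integrable_const _) hint3]
          simp
      _ ≤ R ^ 2 + n * R ^ 2 := by
          have := ih _ _ ν (fun j => hμ _) G hGsm C hGC hGd
          rw [← hmG] at this
          linarith
      _ ≤ ↑(n + 1) * R ^ 2 := by
          push_cast
          nlinarith [sq_nonneg R]

end McdAux

/-- **McDiarmid's bounded differences inequality, Hilbert space version.**
If `Φ` is a bounded measurable function of `n` independent random variables with values in a
real separable Hilbert space, whose value changes by at most `R` in norm when a single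
coordinate is modified, then for every `ξ > 0`,
`P(‖Φ(Z) − EΦ(Z)‖ > ξ + R√n) ≤ exp(−2ξ²/(nR²))`. -/
theorem hilbert_mcdiarmid_deviation
    {Ω : Type*} [MeasureSpace Ω] [IsProbabilityMeasure (ℙ : Measure Ω)]
    {H : Type*} [NormedAddCommGroup H] [InnerProductSpace ℝ H] [CompleteSpace H]
    [TopologicalSpace.SeparableSpace H]
    {n : ℕ} {E : Fin n → Type*} [mE : ∀ i, MeasurableSpace (E i)]
    (Φ : (∀ i, E i) → H) (hΦmeas : StronglyMeasurable Φ)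
    (hΦbdd : ∃ C : ℝ, ∀ z, ‖Φ z‖ ≤ C)
    (R : ℝ)
    (hdiff : ∀ (ℓ : Fin n) (z : ∀ i, E i) (z' : E ℓ),
      ‖Φ z - Φ (Function.update z ℓ z')‖ ≤ R)
    (Z : ∀ i, Ω → E i) (hZmeas : ∀ i, Measurable (Z i))
    (hindep : iIndepFun Z ℙ)
    (ξ : ℝ) (hξ : 0 < ξ) :
    ℙ {ω | ξ + R * Real.sqrt n <
        ‖Φ (fun i => Z i ω) - ∫ ω', Φ (fun i => Z i ω') ∂ℙ‖} ≤
      ENNReal.ofReal (Real.exp (-(2 * ξ ^ 2) / (n * R ^ 2))) := by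
  obtain ⟨C, hC⟩ := hΦbdd
  -- trivial case n = 0
  rcases Nat.eq_zero_or_pos n with hn | hn
  · subst hn
    have h1 : ℙ {ω | ξ + R * Real.sqrt (0:ℕ) <
        ‖Φ (fun i => Z i ω) - ∫ ω', Φ (fun i => Z i ω') ∂ℙ‖} ≤ 1 := prob_le_one
    simpa using h1
  -- R ≥ 0
  haveI hΩ : Nonempty Ω := mcd_nonempty ℙ
  obtain ⟨ω₀⟩ := hΩ
  have hR0 : 0 ≤ R := by
    have := hdiff ⟨0, hn⟩ (fun i => Z i ω₀) (Z ⟨0, hn⟩ ω₀)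
    simpa [Function.update_eq_self] using this
  rcases eq_or_lt_of_le hR0 with hR | hR
  · -- R = 0
    have h1 : ℙ {ω | ξ + R * Real.sqrt n <
        ‖Φ (fun i => Z i ω) - ∫ ω', Φ (fun i => Z i ω') ∂ℙ‖} ≤ 1 := prob_le_one
    simpa [← hR] using h1
  -- main case
  have hnR : (0:ℝ) < n * R ^ 2 := by
    have : (0:ℝ) < n := by exact_mod_cast hn
    positivity
  set μi : ∀ i, Measure (E i) := fun i => Measure.map (Z i) ℙ with hμi
  haveI : ∀ i, IsProbabilityMeasure (μi i) :=
    fun i => Measure.isProbabilityMeasure_map (hZmeas i).aemeasurable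
  set Zvec : Ω → ∀ i, E i := fun ω i => Z i ω with hZvec_def
  have hZvec : Measurable Zvec := measurable_pi_iff.2 hZmeas
  have hmap : Measure.map Zvec ℙ = Measure.pi μi := by
    refine (Measure.pi_eq ?_).symm
    intro s hs
    rw [Measure.map_apply hZvec (MeasurableSet.univ_pi hs)]
    have h1 : Zvec ⁻¹' (Set.univ.pi s) = ⋂ i ∈ Finset.univ, Z i ⁻¹' (s i) := by
      ext ω
      simp [hZvec_def, Set.mem_univ_pi]
    rw [h1, hindep.measure_inter_preimage_eq_mul Finset.univ (fun i _ => hs i)]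
    refine Finset.prod_congr rfl (fun i _ => ?_)
    rw [hμi]
    rw [Measure.map_apply (hZmeas i) (hs i)]
  have hΦpi : AEStronglyMeasurable Φ (Measure.pi μi) := hΦmeas.aestronglyMeasurable
  set m : H := ∫ ω', Φ (fun i => Z i ω') ∂ℙ with hm
  have hmpi : m = ∫ z, Φ z ∂(Measure.pi μi) := by
    rw [hm, ← hmap, integral_map hZvec.aemeasurable (by rw [hmap]; exact hΦpi)]
  set f : (∀ i, E i) → ℝ := fun z => ‖Φ z - m‖ with hf_def
  have hfsm : StronglyMeasurable f := (hΦmeas.sub stronglyMeasurable_const).norm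
  have hfmeas : Measurable f := hfsm.measurable
  have hfC : ∀ z, |f z| ≤ C + ‖m‖ := by
    intro z
    rw [hf_def, abs_of_nonneg (norm_nonneg _)]
    exact le_trans (norm_sub_le _ _) (by linarith [hC z])
  have hfd : ∀ (ℓ : Fin n) (z : ∀ i, E i) (z' : E ℓ),
      |f z - f (Function.update z ℓ z')| ≤ R := by
    intro ℓ z z'
    refine le_trans (abs_norm_sub_norm_le _ _) ?_
    have h1 : Φ z - m - (Φ (Function.update z ℓ z') - m)
        = Φ z - Φ (Function.update z ℓ z') := by abel
    rw [h1]
    exact hdiff ℓ z z'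
  -- expectation bound
  set Ef : ℝ := ∫ z, f z ∂(Measure.pi μi) with hEf_def
  have hfi : Integrable f (Measure.pi μi) :=
    mcd_integrable _ hfsm.aestronglyMeasurable (C + ‖m‖)
      (fun z => by rw [Real.norm_eq_abs]; exact hfC z)
  have hf2i : Integrable (fun z => f z ^ 2) (Measure.pi μi) :=
    mcd_integrable _ ((hfsm.measurable.pow_const 2).aestronglyMeasurable) ((C + ‖m‖) ^ 2)
      (fun z => by
        rw [Real.norm_eq_abs, abs_of_nonneg (sq_nonneg _)]
        have := hfC z
        have h2 := abs_nonneg (f z)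
        nlinarith [sq_abs (f z)])
  have hEf0 : 0 ≤ Ef := integral_nonneg (fun z => norm_nonneg _)
  have hvar : ∫ z, f z ^ 2 ∂(Measure.pi μi) ≤ n * R ^ 2 := by
    have := mcd_var_pi R n E mE μi (fun i => inferInstance) Φ hΦmeas C hC hdiff
    rw [← hmpi] at this
    exact this
  have hEfsq : Ef ^ 2 ≤ n * R ^ 2 := by
    have hkey : ∫ z, (f z - Ef) ^ 2 ∂(Measure.pi μi)
        = ∫ z, f z ^ 2 ∂(Measure.pi μi) - Ef ^ 2 := by
      have h1 : ∀ z, (f z - Ef) ^ 2 = f z ^ 2 - (2 * Ef) * f z + Ef ^ 2 := by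
        intro z; ring
      rw [integral_congr_ae (Filter.Eventually.of_forall h1),
        integral_add (((hf2i.sub (hfi.const_mul (2 * Ef)))).congr ?_) (integrable_const _),
        integral_sub hf2i (hfi.const_mul (2 * Ef)), integral_const_mul, integral_const]
      · simp only [measure_univ, probReal_univ, ENNReal.toReal_one, smul_eq_mul, one_mul, mul_one]
        rw [← hEf_def]
        ring
      · filter_upwards with z
        simp
    have h0 : 0 ≤ ∫ z, (f z - Ef) ^ 2 ∂(Measure.pi μi) :=
      integral_nonneg (fun z => sq_nonneg _)
    rw [hkey] at h0
    linarith
  have hEfle : Ef ≤ R * Real.sqrt n := by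
    have h1 : Ef ≤ Real.sqrt (n * R ^ 2) := by
      rw [Real.le_sqrt hEf0]
      · exact hEfsq
      · positivity
    have h2 : Real.sqrt ((n:ℝ) * R ^ 2) = R * Real.sqrt n := by
      rw [Real.sqrt_mul (Nat.cast_nonneg n), Real.sqrt_sq hR.le, mul_comm]
    linarith [h2 ▸ h1]
  -- Chernoff
  set t : ℝ := 4 * ξ / (n * R ^ 2) with ht_def
  have ht : 0 < t := by positivity
  set X : Ω → ℝ := fun ω => f (Zvec ω) with hX_def
  have hXmeas : Measurable X := hfmeas.comp hZvec
  have hXint : Integrable (fun ω => Real.exp (t * X ω)) ℙ := by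
    refine mcd_integrable _ (Real.measurable_exp.comp (hXmeas.const_mul t)).aestronglyMeasurable
      (Real.exp (|t| * (C + ‖m‖))) ?_
    intro ω
    rw [Real.norm_eq_abs, abs_of_pos (Real.exp_pos _), Real.exp_le_exp]
    calc t * X ω ≤ |t * X ω| := le_abs_self _
      _ = |t| * |X ω| := abs_mul _ _
      _ ≤ |t| * (C + ‖m‖) := mul_le_mul_of_nonneg_left (hfC _) (abs_nonneg t)
  have hmgf : mgf X ℙ t = ∫ z, Real.exp (t * f z) ∂(Measure.pi μi) := by
    rw [mgf, ← hmap, integral_map hZvec.aemeasurable]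
    rw [hmap]
    exact (Real.measurable_exp.comp (hfmeas.const_mul t)).aestronglyMeasurable
  have hchern := measure_ge_le_exp_mul_mgf (X := X) (μ := ℙ) (ξ + R * Real.sqrt n) ht.le hXint
  have hsubset : ℙ {ω | ξ + R * Real.sqrt n <
      ‖Φ (fun i => Z i ω) - ∫ ω', Φ (fun i => Z i ω') ∂ℙ‖}
      ≤ ℙ {ω | ξ + R * Real.sqrt n ≤ X ω} := by
    refine measure_mono ?_
    intro ω hω
    simp only [Set.mem_setOf_eq] at hω ⊢
    exact le_of_lt hω
  refine le_trans hsubset ?_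
  rw [show ℙ {ω | ξ + R * Real.sqrt n ≤ X ω}
      = ENNReal.ofReal (ℙ {ω | ξ + R * Real.sqrt n ≤ X ω}).toReal from
    (ENNReal.ofReal_toReal (measure_ne_top _ _)).symm]
  refine ENNReal.ofReal_le_ofReal (le_trans hchern ?_)
  -- numeric computation
  have hmgfle : mgf X ℙ t ≤ Real.exp (t * (R * Real.sqrt n) + t ^ 2 * n * R ^ 2 / 8) := by
    rw [hmgf]
    refine le_trans (mcd_mgf_pi t R n E mE μi (fun i => inferInstance) f hfmeas (C + ‖m‖)
      hfC hfd) ?_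
    rw [Real.exp_le_exp]
    have := mul_le_mul_of_nonneg_left hEfle ht.le
    rw [← hEf_def]
    linarith
  calc Real.exp (-t * (ξ + R * Real.sqrt n)) * mgf X ℙ t
      ≤ Real.exp (-t * (ξ + R * Real.sqrt n))
          * Real.exp (t * (R * Real.sqrt n) + t ^ 2 * n * R ^ 2 / 8) :=
        mul_le_mul_of_nonneg_left hmgfle (Real.exp_pos _).le
    _ = Real.exp (-(t * ξ) + t ^ 2 * n * R ^ 2 / 8) := by
        rw [← Real.exp_add]; congr 1; ring
    _ = Real.exp (-(2 * ξ ^ 2) / (n * R ^ 2)) := by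
        congr 1
        rw [ht_def]
        field_simp
        ring
end

section
/- Let (a_j)_{j≥0} and (b_j)_{j≥0} be two nonincreasing square-summable sequences of nonnegative real numbers and let 0 < ε₁ < ε₂. Then #{j : b_j > ε₂} ≤ #{j : a_j > ε₁} + (Σ_{j≥0} (a_j − b_j)²)/(ε₂ − ε₁)². Equivalently, for two positive self-adjoint Hilbert–Schmidt operators T₁, T₂ with decreasingly ordered eigenvalue sequences λ(T₁), λ(T₂): deg_∞(T₂, ε₂) ≤ deg_∞(T₁, ε₁) + ‖λ(T₁) − λ(T₂)‖²_{ℓ²}/(ε₂ − ε₁)². -/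
/-- **Comparison of level-counting functions of two nonincreasing square-summable nonnegative
sequences: `#{j : b_j > ε₂} ≤ #{j : a_j > ε₁} + ‖a − b‖²_{ℓ²}/(ε₂ − ε₁)²`.** -/
theorem count_above_level_comparison
    (a b : ℕ → ℝ) (ha : Antitone a) (hb : Antitone b)
    (ha0 : ∀ j, 0 ≤ a j) (hb0 : ∀ j, 0 ≤ b j)
    (ha2 : Summable fun j => a j ^ 2) (hb2 : Summable fun j => b j ^ 2)
    (ε₁ ε₂ : ℝ) (hε₁ : 0 < ε₁) (hε : ε₁ < ε₂) :
    ({j : ℕ | ε₂ < b j}.ncard : ℝ) ≤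
      ({j : ℕ | ε₁ < a j}.ncard : ℝ) + (∑' j, (a j - b j) ^ 2) / (ε₂ - ε₁) ^ 2 := by
  set S : Set ℕ := {j : ℕ | ε₁ < a j} with hS
  set U : Set ℕ := {j : ℕ | ε₂ < b j} with hU
  set N := S.ncard with hN
  set M := U.ncard with hM
  -- summability of the squared difference
  have hsd : Summable fun j => (a j - b j) ^ 2 := by
    refine Summable.of_nonneg_of_le (fun j => sq_nonneg _) (fun j => ?_)
      ((ha2.mul_left 2).add (hb2.mul_left 2))
    nlinarith [sq_nonneg (a j + b j)]
  have hT0 : 0 ≤ ∑' j, (a j - b j) ^ 2 := tsum_nonneg fun j => sq_nonneg _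
  have hden : (0:ℝ) < (ε₂ - ε₁) ^ 2 := pow_pos (by linarith) 2
  -- a tends to zero
  have haz : Filter.Tendsto a Filter.atTop (nhds 0) := by
    have h1 : Filter.Tendsto (fun j => a j ^ 2) Filter.atTop (nhds 0) :=
      ha2.tendsto_atTop_zero
    have h2 : Filter.Tendsto (fun j => Real.sqrt (a j ^ 2)) Filter.atTop (nhds 0) := by
      simpa [Function.comp_def] using (Real.continuous_sqrt.tendsto 0).comp h1
    refine h2.congr fun j => ?_
    exact Real.sqrt_sq (ha0 j)
  -- S is finite
  have hSfin : S.Finite := by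
    obtain ⟨K, hK⟩ := (haz.eventually (gt_mem_nhds hε₁)).exists_forall_of_atTop
    apply Set.Finite.subset (Set.finite_Iio K)
    intro j hj
    by_contra hjK
    rw [Set.mem_Iio, not_lt] at hjK
    exact absurd hj (not_lt.mpr (le_of_lt (hK j hjK)))
  -- if j < M then ε₂ < b j
  have hbM : ∀ j, j < M → ε₂ < b j := by
    intro j hj
    by_contra hbj
    push_neg at hbj
    have hsub : U ⊆ ↑(Finset.range j) := by
      intro i hi
      simp only [Finset.coe_range, Set.mem_Iio]
      by_contra hij
      push_neg at hij
      exact absurd (lt_of_lt_of_le hi (hb hij)) (not_lt.mpr hbj)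
    have := Set.ncard_le_ncard hsub (Finset.range j).finite_toSet
    rw [Set.ncard_coe_finset, Finset.card_range] at this
    omega
  -- if N ≤ j then a j ≤ ε₁
  have haN : ∀ j, N ≤ j → a j ≤ ε₁ := by
    intro j hj
    by_contra haj
    push_neg at haj
    have hsub : ↑(Finset.range (j + 1)) ⊆ S := by
      intro i hi
      simp only [Finset.coe_range, Set.mem_Iio] at hi
      exact lt_of_lt_of_le haj (ha (by omega))
    have := Set.ncard_le_ncard hsub hSfin
    rw [Set.ncard_coe_finset, Finset.card_range] at this
    omega
  -- key sum bound
  have hkey : ((M - N : ℕ) : ℝ) * (ε₂ - ε₁) ^ 2 ≤ ∑' j, (a j - b j) ^ 2 := by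
    have h1 : ∀ j ∈ Finset.Ico N M, (ε₂ - ε₁) ^ 2 ≤ (a j - b j) ^ 2 := by
      intro j hj
      rw [Finset.mem_Ico] at hj
      have h2 : ε₂ - ε₁ ≤ b j - a j := by
        have := hbM j hj.2
        have := haN j hj.1
        linarith
      have h3 : (ε₂ - ε₁) ^ 2 ≤ (b j - a j) ^ 2 :=
        pow_le_pow_left₀ (le_of_lt (by linarith)) h2 2
      nlinarith
    calc ((M - N : ℕ) : ℝ) * (ε₂ - ε₁) ^ 2
        = ∑ j ∈ Finset.Ico N M, (ε₂ - ε₁) ^ 2 := by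
          rw [Finset.sum_const, Nat.card_Ico, nsmul_eq_mul]
      _ ≤ ∑ j ∈ Finset.Ico N M, (a j - b j) ^ 2 := Finset.sum_le_sum h1
      _ ≤ ∑' j, (a j - b j) ^ 2 :=
          Summable.sum_le_tsum _ (fun j _ => sq_nonneg _) hsd
  have hfrac : ((M - N : ℕ) : ℝ) ≤ (∑' j, (a j - b j) ^ 2) / (ε₂ - ε₁) ^ 2 :=
    (le_div_iff₀ hden).mpr hkey
  rcases le_or_gt M N with h | h
  · have : (M : ℝ) ≤ (N : ℝ) := Nat.cast_le.mpr h
    have := div_nonneg hT0 (le_of_lt hden)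
    linarith
  · have : (M : ℝ) = (N : ℝ) + ((M - N : ℕ) : ℝ) := by
      have : N + (M - N) = M := by omega
      exact_mod_cast (by omega : M = N + (M - N))
    linarith
end
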